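/- arXiv:2001.01337 — 4 statements merged into one kernel-verified Lean document; each statement's English description precedes it below -/
import Mathlib

section
/- Let m be a lawful monad on Type u, ι a type, and γ a family of operations assigning to each type X a map γ_X : (ι → m X) → m X. Suppose γ is algebraic, i.e. for all types X, Y, every κ : ι → m X and every f : X → m Y one has (γ_X κ) >>= f = γ_Y (fun i => κ i >>= f). Then γ is determined by its generic effect Γ := γ_ι pure ∈ m ι: for every type X and every μ : ι → m X, γ_X μ = (γ_ι pure) >>= μ. -/
universe u

/-- An algebraic operation family is determined by its generic effect `γ ι pure`. -/
theorem algebraic_op_determined_by_generic_effect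
    {m : Type u → Type u} [Monad m] [LawfulMonad m] {ι : Type u}
    (γ : ∀ X : Type u, (ι → m X) → m X)
    (halg : ∀ (X Y : Type u) (κ : ι → m X) (f : X → m Y),
      (γ X κ) >>= f = γ Y (fun i => κ i >>= f)) :
    ∀ (X : Type u) (μ : ι → m X), γ X μ = (γ ι pure) >>= μ := by
  intro X μ
  rw [halg ι X pure μ]
  simp
end

section
/- Let m be a lawful monad on Type u, ι a type, and γ an algebraic ι-ary operation family on m, i.e. for all κ : ι → m X and f : X → m Y, (γ_X κ) >>= f = γ_Y (fun i => κ i >>= f). Let Γ := γ_ι pure be its generic effect. If (Γ, x) is a formal presentation of μ : m X, i.e. μ = Γ >>= (fun i => pure (x i)) for some x : ι → X, then μ = γ_X (fun i => pure (x i)). -/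
universe u

/-- If `(Γ, x)` is a formal presentation of `μ`, where `Γ` is the generic effect of an
algebraic operation family `γ`, then `μ = γ X (fun i => pure (x i))`. -/
theorem presentation_via_algebraic_op
    {m : Type u → Type u} [Monad m] [LawfulMonad m] {ι : Type u}
    (γ : ∀ X : Type u, (ι → m X) → m X)
    (halg : ∀ (X Y : Type u) (κ : ι → m X) (f : X → m Y),
      (γ X κ) >>= f = γ Y (fun i => κ i >>= f))
    {X : Type u} (μ : m X) (x : ι → X)
    (hpres : μ = (γ ι pure) >>= (fun i => pure (x i))) :
    μ = γ X (fun i => pure (x i)) := by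
  rw [hpres, halg]; simp
end

section
/- Every probability distribution admits a formal presentation over the natural numbers: for every type X and every μ : PMF X there exist a generic effect Γ : PMF ℕ and a value part s : ℕ → X such that μ = Γ.map s. -/
/-- Every probability distribution admits a formal presentation over the natural numbers. -/
theorem pmf_formal_presentation {X : Type*} (μ : PMF X) :
    ∃ (Γ : PMF ℕ) (s : ℕ → X), μ = Γ.map s := by
  obtain ⟨f, hf⟩ := (μ.support_countable).exists_eq_range μ.support_nonempty
  classical
  let g : X → ℕ := fun x =>
    if h : x ∈ Set.range f then h.choose else 0
  have hg : ∀ x ∈ μ.support, f (g x) = x := by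
    intro x hx
    have hx' : x ∈ Set.range f := hf ▸ hx
    simp only [g, dif_pos hx']
    exact hx'.choose_spec
  refine ⟨μ.map g, f, ?_⟩
  rw [PMF.map_comp]
  ext b
  rw [PMF.map_apply]
  nth_rewrite 1 [show μ b = (μ.map id) b by rw [PMF.map_id]]
  rw [PMF.map_apply]
  refine tsum_congr fun a => ?_
  by_cases ha : μ a = 0
  · simp [ha]
  · rw [Function.comp_apply, hg a ha]; rfl
end

section
/- For commutative monads, the bottom effect also absorbs on the right: let m be a lawful monad on Type u that is commutative, i.e. for all types ι, κ, X, all Γ : m ι, Δ : m κ and x : ι → κ → X one has Γ >>= (fun i => Δ >>= (fun j => pure (x i j))) = Δ >>= (fun j => Γ >>= (fun i => pure (x i j))). Let ⊥₀ : m PEmpty and define ⊥_X := PEmpty.elim <$> ⊥₀. Then for every Γ : m ι, Γ >>= (fun _ => ⊥_X) = ⊥_X. -/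
universe u

/-- For commutative monads, the bottom effect absorbs on the right. -/
theorem bottom_effect_absorbs_right_of_commutative
    {m : Type u → Type u} [Monad m] [LawfulMonad m]
    (hcomm : ∀ {ι κ X : Type u} (Γ : m ι) (Δ : m κ) (x : ι → κ → X),
      Γ >>= (fun i => Δ >>= (fun j => pure (x i j)))
        = Δ >>= (fun j => Γ >>= (fun i => pure (x i j))))
    (bot0 : m PEmpty) {ι X : Type u} (Γ : m ι) :
    Γ >>= (fun _ => (PEmpty.elim <$> bot0 : m X)) = (PEmpty.elim <$> bot0 : m X) := by
  simp only [map_eq_pure_bind]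
  rw [hcomm Γ bot0 (fun _ e => e.elim)]
  exact bind_congr fun e => e.elim
end
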